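/- arXiv:1708.09067 — 4 statements merged into one kernel-verified Lean document; each statement's English description precedes it below -/
import Mathlib

section
/- Let K be a field, κ, n₀ ∈ ℕ with n₀ > 2κ, and F, G, H, U, V ∈ K[[X]][Y] with H monic in Y, such that F ≡ G·H mod X^{n₀}, U·G + V·H ≡ X^κ mod X^{n₀−κ}, deg_Y U < deg_Y H and deg_Y V < deg_Y G. Let α ∈ K[[X]][Y] be the polynomial with X^κ·α = F − G·H (which exists since X^{n₀} divides F − G·H and n₀ > κ), and let Q, R be the quotient and remainder of the Euclidean division of U·α by the monic polynomial H in K[[X]][Y]. Define G̃ := G + α·V + Q·G and H̃ := H + R. Then H̃ is monic in Y of the same degree as H, G̃ ≡ G mod X^{n₀−κ}, H̃ ≡ H mod X^{n₀−κ}, and F ≡ G̃·H̃ mod X^{2(n₀−κ)}. -/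
open Polynomial

/-- Correctness of one step of the generalised Hensel lifting (factor update):
with `α` such that `X^κ · α = F - G·H`, `Q, R` the quotient and remainder of `U·α`
by the monic `H`, and `G̃ = G + α·V + Q·G`, `H̃ = H + R`, the polynomial `H̃` is monic
of the same degree as `H`, `G̃ ≡ G`, `H̃ ≡ H (mod X^(n₀-κ))` and
`F ≡ G̃·H̃ (mod X^(2(n₀-κ)))`. -/
theorem generalised_hensel_step_factors {K : Type*} [Field K] (κ n₀ : ℕ)
    (hn : 2 * κ < n₀)
    (F G H U V α : Polynomial (PowerSeries K)) (hH : H.Monic)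
    (hFGH : Polynomial.C ((PowerSeries.X : PowerSeries K) ^ n₀) ∣ F - G * H)
    (hUV : Polynomial.C ((PowerSeries.X : PowerSeries K) ^ (n₀ - κ)) ∣
      U * G + V * H - Polynomial.C ((PowerSeries.X : PowerSeries K) ^ κ))
    (hdegU : U.degree < H.degree) (hdegV : V.degree < G.degree)
    (hα : Polynomial.C ((PowerSeries.X : PowerSeries K) ^ κ) * α = F - G * H) :
    (H + (U * α) %ₘ H).Monic ∧
    (H + (U * α) %ₘ H).degree = H.degree ∧
    Polynomial.C ((PowerSeries.X : PowerSeries K) ^ (n₀ - κ)) ∣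
      (G + α * V + ((U * α) /ₘ H) * G) - G ∧
    Polynomial.C ((PowerSeries.X : PowerSeries K) ^ (n₀ - κ)) ∣
      (H + (U * α) %ₘ H) - H ∧
    Polynomial.C ((PowerSeries.X : PowerSeries K) ^ (2 * (n₀ - κ))) ∣
      F - (G + α * V + ((U * α) /ₘ H) * G) * (H + (U * α) %ₘ H) := by
  set m := n₀ - κ with hm
  have hκm : κ + m = n₀ := by omega
  have hXκ : (Polynomial.C ((PowerSeries.X : PowerSeries K) ^ κ)) ≠ 0 := by
    simp [Polynomial.C_eq_zero, pow_ne_zero, PowerSeries.X_ne_zero]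
  -- α = C (X^m) * W
  obtain ⟨W₀, hW₀⟩ := hFGH
  have hW : α = Polynomial.C ((PowerSeries.X : PowerSeries K) ^ m) * W₀ := by
    apply mul_left_cancel₀ hXκ
    rw [hα, hW₀, ← mul_assoc, ← Polynomial.C_mul, ← pow_add, hκm]
  obtain ⟨W₂, hW₂⟩ := hUV
  -- division facts
  have hmlt : degree ((U * W₀) %ₘ H) < degree H := degree_modByMonic_lt _ hH
  have hdiv : (U * α) /ₘ H = Polynomial.C ((PowerSeries.X : PowerSeries K) ^ m) * ((U * W₀) /ₘ H) ∧
      (U * α) %ₘ H = Polynomial.C ((PowerSeries.X : PowerSeries K) ^ m) * ((U * W₀) %ₘ H) := by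
    apply div_modByMonic_unique _ _ hH
    constructor
    · have h := modByMonic_add_div (U * W₀) H
      calc Polynomial.C ((PowerSeries.X : PowerSeries K) ^ m) * ((U * W₀) %ₘ H)
            + H * (Polynomial.C ((PowerSeries.X : PowerSeries K) ^ m) * ((U * W₀) /ₘ H))
          = Polynomial.C ((PowerSeries.X : PowerSeries K) ^ m) *
            ((U * W₀) %ₘ H + H * ((U * W₀) /ₘ H)) := by ring
        _ = U * α := by rw [h, hW]; ring
    · calc degree (Polynomial.C ((PowerSeries.X : PowerSeries K) ^ m) * ((U * W₀) %ₘ H))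
          ≤ degree ((U * W₀) %ₘ H) := by
            simpa using degree_mul_le _ ((U * W₀) %ₘ H)
        _ < degree H := hmlt
  obtain ⟨hQ, hR⟩ := hdiv
  have hRlt : degree ((U * α) %ₘ H) < degree H := degree_modByMonic_lt _ hH
  refine ⟨hH.add_of_left hRlt, degree_add_eq_left_of_degree_lt hRlt, ?_, ?_, ?_⟩
  · refine ⟨W₀ * V + ((U * W₀) /ₘ H) * G, ?_⟩
    rw [hQ, hW]; ring
  · exact ⟨(U * W₀) %ₘ H, by rw [hR]; ring⟩
  · refine ⟨-(W₀ * W₂) - (W₀ * V + ((U * W₀) /ₘ H) * G) * ((U * W₀) %ₘ H), ?_⟩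
    have hUW : (U * W₀) %ₘ H = U * W₀ - H * ((U * W₀) /ₘ H) :=
      modByMonic_eq_sub_mul_div _ H
    have h2m : ((PowerSeries.X : PowerSeries K) ^ (2 * m)) =
        (PowerSeries.X : PowerSeries K) ^ m * (PowerSeries.X : PowerSeries K) ^ m := by
      rw [← pow_add, two_mul]
    rw [h2m, Polynomial.C_mul, hQ, hR, hW, hUW]
    have hF : F = G * H + Polynomial.C ((PowerSeries.X : PowerSeries K) ^ κ) *
        (Polynomial.C ((PowerSeries.X : PowerSeries K) ^ m) * W₀) := by
      rw [← hW, hα]; ring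
    rw [hF]
    linear_combination (- Polynomial.C ((PowerSeries.X : PowerSeries K) ^ m) * W₀) * hW₂
end

section
/- Let K be a field, κ, n₀ ∈ ℕ with n₀ > 2κ, and F, G, H, U, V ∈ K[[X]][Y] with H monic in Y, F ≡ G·H mod X^{n₀}, U·G + V·H ≡ X^κ mod X^{n₀−κ}, deg_Y U < deg_Y H, deg_Y V < deg_Y G. Let α ∈ K[[X]][Y] satisfy X^κ·α = F − G·H, let Q, R be the quotient and remainder of U·α by H, and set G̃ := G + α·V + Q·G, H̃ := H + R. Let β ∈ K[[X]][Y] be such that X^κ·(1 + β) = U·G̃ + V·H̃ (which exists, X^κ dividing U·G̃ + V·H̃), and let S, T be the quotient and remainder of the Euclidean division of U·β by the monic polynomial H̃. Then Ũ := U − T and Ṽ := V − β·V − S·G̃ satisfy Ũ·G̃ + Ṽ·H̃ ≡ X^κ mod X^{2n₀−3κ}, with deg_Y Ũ < deg_Y H̃. -/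
open Polynomial

/-- Correctness of the Bézout-relation update in one step of the generalised Hensel
lifting: with `G̃ = G + α·V + Q·G`, `H̃ = H + R` as in the factor update, `β` such that
`X^κ·(1+β) = U·G̃ + V·H̃`, and `S, T` the quotient and remainder of `U·β` by the monic
`H̃`, the polynomials `Ũ = U - T` and `Ṽ = V - β·V - S·G̃` satisfy
`Ũ·G̃ + Ṽ·H̃ ≡ X^κ (mod X^(2n₀-3κ))` with `deg_Y Ũ < deg_Y H̃`. -/
theorem generalised_hensel_step_bezout {K : Type*} [Field K] (κ n₀ : ℕ)
    (hn : 2 * κ < n₀)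
    (F G H U V α β G' H' : Polynomial (PowerSeries K)) (hH : H.Monic)
    (hFGH : Polynomial.C ((PowerSeries.X : PowerSeries K) ^ n₀) ∣ F - G * H)
    (hUV : Polynomial.C ((PowerSeries.X : PowerSeries K) ^ (n₀ - κ)) ∣
      U * G + V * H - Polynomial.C ((PowerSeries.X : PowerSeries K) ^ κ))
    (hdegU : U.degree < H.degree) (hdegV : V.degree < G.degree)
    (hα : Polynomial.C ((PowerSeries.X : PowerSeries K) ^ κ) * α = F - G * H)
    (hG' : G' = G + α * V + ((U * α) /ₘ H) * G)
    (hH' : H' = H + (U * α) %ₘ H)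
    (hβ : Polynomial.C ((PowerSeries.X : PowerSeries K) ^ κ) * (1 + β) =
      U * G' + V * H') :
    Polynomial.C ((PowerSeries.X : PowerSeries K) ^ (2 * n₀ - 3 * κ)) ∣
      (U - (U * β) %ₘ H') * G' + (V - β * V - ((U * β) /ₘ H') * G') * H' -
        Polynomial.C ((PowerSeries.X : PowerSeries K) ^ κ) ∧
    (U - (U * β) %ₘ H').degree < H'.degree := by
  set x : PowerSeries K := PowerSeries.X with hx
  have hxne : ∀ m : ℕ, (Polynomial.C (x ^ m) : Polynomial (PowerSeries K)) ≠ 0 := by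
    intro m
    simp [hx, Polynomial.C_ne_zero, pow_ne_zero, PowerSeries.X_ne_zero]
  have hHne : H ≠ 0 := hH.ne_zero
  -- α is divisible by X^(n₀-κ)
  obtain ⟨W, hW⟩ := hFGH
  have hα' : α = Polynomial.C (x ^ (n₀ - κ)) * W := by
    apply mul_left_cancel₀ (hxne κ)
    rw [hα, hW, ← mul_assoc, ← Polynomial.C_mul, ← pow_add]
    congr 3
    omega
  set Q : Polynomial (PowerSeries K) := (U * α) /ₘ H with hQdef
  set R : Polynomial (PowerSeries K) := (U * α) %ₘ H with hRdef
  have hUα : U * α = x ^ (n₀ - κ) • (U * W) := by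
    rw [hα', Polynomial.smul_eq_C_mul]; ring
  have hR : R = Polynomial.C (x ^ (n₀ - κ)) * ((U * W) %ₘ H) := by
    rw [hRdef, hUα, Polynomial.smul_modByMonic, Polynomial.smul_eq_C_mul]
  have hdiv1 : R + H * Q = U * α := Polynomial.modByMonic_add_div (U * α) H
  have hQ : Q = Polynomial.C (x ^ (n₀ - κ)) * ((U * W) /ₘ H) := by
    apply mul_left_cancel₀ hHne
    have h2 : (U * W) %ₘ H + H * ((U * W) /ₘ H) = U * W :=
      Polynomial.modByMonic_add_div (U * W) H
    have : H * Q = U * α - R := by linear_combination hdiv1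
    rw [this, hα', hR]
    linear_combination -(Polynomial.C (x ^ (n₀ - κ)) * h2)
  obtain ⟨E, hE⟩ := hUV
  -- β = C (x^(n₀-2κ)) * D
  set D : Polynomial (PowerSeries K) :=
    E * (1 + Q) + ((U * W) /ₘ H) * Polynomial.C (x ^ κ) + 2 * V * ((U * W) %ₘ H) with hD
  have hpow1 : (Polynomial.C (x ^ κ) : Polynomial (PowerSeries K)) *
      Polynomial.C (x ^ (n₀ - 2 * κ)) = Polynomial.C (x ^ (n₀ - κ)) := by
    rw [← Polynomial.C_mul, ← pow_add]
    congr 2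
    omega
  have hβ' : β = Polynomial.C (x ^ (n₀ - 2 * κ)) * D := by
    apply mul_left_cancel₀ (hxne κ)
    have key : Polynomial.C (x ^ κ) * β = Polynomial.C (x ^ (n₀ - κ)) * D := by
      linear_combination hβ + U * hG' + V * hH' - V * hdiv1 + (1 + Q) * hE +
        Polynomial.C (x ^ κ) * hQ + 2 * V * hR
    rw [key, ← mul_assoc, hpow1]
  -- H' is monic of the same degree as H
  have hdegR : R.degree < H.degree := Polynomial.degree_modByMonic_lt (U * α) hH
  have hH'monic : H'.Monic := by
    rw [hH']
    exact hH.add_of_left hdegR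
  have hdegH' : H'.degree = H.degree := by
    rw [hH']
    exact Polynomial.degree_add_eq_left_of_degree_lt hdegR
  have hdiv2 : (U * β) %ₘ H' + H' * ((U * β) /ₘ H') = U * β :=
    Polynomial.modByMonic_add_div (U * β) H'
  constructor
  · refine ⟨-(D ^ 2), ?_⟩
    have hpow2 : (Polynomial.C (x ^ κ) : Polynomial (PowerSeries K)) *
        Polynomial.C (x ^ (n₀ - 2 * κ)) ^ 2 = Polynomial.C (x ^ (2 * n₀ - 3 * κ)) := by
      rw [← Polynomial.C_pow, ← Polynomial.C_mul, ← pow_mul, ← pow_add]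
      congr 2
      omega
    -- Ũ G' + Ṽ H' - X^κ = -X^κ β² = C(x^(2n₀-3κ)) * (-(D^2))
    linear_combination (β - 1) * hβ - G' * hdiv2 -
      (Polynomial.C (x ^ κ) * (β + Polynomial.C (x ^ (n₀ - 2 * κ)) * D)) * hβ' -
      D ^ 2 * hpow2
  · calc (U - (U * β) %ₘ H').degree ≤ max U.degree ((U * β) %ₘ H').degree :=
          Polynomial.degree_sub_le _ _
      _ < H'.degree := max_lt (by rw [hdegH']; exact hdegU)
          (Polynomial.degree_modByMonic_lt (U * β) hH'monic)
end

section
/- Let K be a field, κ ∈ ℕ, and F, G, H, U, V ∈ K[[X]][Y] with H monic in Y, such that F ≡ G·H mod X^{2κ+1}, U·G + V·H ≡ X^κ mod X^{κ+1}, deg_Y U < deg_Y H and deg_Y V < deg_Y G. Then for every n ∈ ℕ there exist G̃, H̃ ∈ K[[X]][Y] with H̃ monic in Y of degree deg_Y H, such that G̃ ≡ G mod X^{κ+1}, H̃ ≡ H mod X^{κ+1}, and F ≡ G̃·H̃ mod X^{n+2κ}. Moreover, if G*, H* ∈ K[[X]][Y] with H* monic of degree deg_Y H satisfy G* ≡ G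 mod X^{κ+1}, H* ≡ H mod X^{κ+1} and F ≡ G*·H* mod X^{n+2κ}, then G̃ ≡ G* mod X^n and H̃ ≡ H* mod X^n. -/
open Polynomial

section Aux
variable {R : Type*} [CommRing R] [IsDomain R] {r : R}

lemma aux_not_dvd (hr : Prime r) {Hs : R[X]} (hmon : Hs.Monic) : ¬ (C r ∣ Hs) := by
  intro h
  have := (Polynomial.C_dvd_iff_dvd_coeff r Hs).mp h Hs.natDegree
  rw [hmon.coeff_natDegree] at this
  exact hr.not_unit (isUnit_of_dvd_one this)

lemma aux_div (hr : Prime r) (κ : ℕ) (E W Z Hs : R[X]) (hmon : Hs.Monic)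
    (hdeg : E.degree < Hs.degree)
    (heq : (C r) ^ κ * E + W * Hs = (C r) ^ (κ + 1) * Z) :
    (C r) ∣ E ∧ (C r) ^ (κ + 1) ∣ W := by
  have hcne : (C r : R[X]) ≠ 0 := by
    simpa using hr.ne_zero
  have h1 : ((C r) ^ κ * E) %ₘ Hs = (C r) ^ κ * E := by
    rw [modByMonic_eq_self_iff hmon]
    calc ((C r) ^ κ * E).degree ≤ ((C r) ^ κ).degree + E.degree := degree_mul_le _ _
      _ ≤ 0 + E.degree := by
          gcongr
          simpa [← map_pow] using degree_C_le (a := r ^ κ)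
      _ = E.degree := by rw [zero_add]
      _ < Hs.degree := hdeg
  have h2 : ((C r) ^ κ * E) %ₘ Hs = (C r) ^ (κ + 1) * (Z %ₘ Hs) := by
    have := congrArg (fun p => p %ₘ Hs) heq
    simp only [add_modByMonic] at this
    rw [(modByMonic_eq_zero_iff_dvd hmon).mpr (dvd_mul_left _ _), add_zero] at this
    rw [this, ← map_pow, ← smul_eq_C_mul, smul_modByMonic, smul_eq_C_mul, map_pow]
  have hE : E = (C r) * (Z %ₘ Hs) := by
    apply mul_left_cancel₀ (pow_ne_zero κ hcne)
    rw [← h1, h2]; ring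
  refine ⟨⟨_, hE⟩, ?_⟩
  have hWHs : W * Hs = (C r) ^ (κ + 1) * (Z - Z %ₘ Hs) := by
    have : W * Hs = (C r) ^ (κ + 1) * Z - (C r) ^ κ * E := by
      linear_combination heq
    rw [this, hE]; ring
  exact (Polynomial.prime_C_iff.mpr hr).pow_dvd_of_dvd_mul_right (κ + 1) (aux_not_dvd hr hmon) ⟨_, hWHs⟩

/-- One step of the uniqueness argument. -/
lemma aux_step (hr : Prime r) (κ : ℕ) (U V G₁ G₂ H₂ D₁ E₁ : R[X])
    (hmon : H₂.Monic) (hdeg : E₁.degree < H₂.degree)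
    (hbez : (C r) ^ (κ + 1) ∣ U * G₂ + V * H₂ - (C r) ^ κ)
    (hGG : (C r) ^ (κ + 1) ∣ G₂ - G₁)
    (hmain : (C r) ^ (κ + 1) ∣ D₁ * H₂ + G₁ * E₁) :
    (C r) ∣ D₁ ∧ (C r) ∣ E₁ := by
  have hcne : (C r : R[X]) ≠ 0 := by simpa using hr.ne_zero
  obtain ⟨P, hP⟩ := hbez
  obtain ⟨S₁, hS⟩ := hGG
  obtain ⟨Q, hQ⟩ := hmain
  have heq : (C r) ^ κ * E₁ + (U * D₁ - V * E₁) * H₂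
      = (C r) ^ (κ + 1) * (-(E₁ * P) + U * Q + U * E₁ * S₁) := by
    linear_combination (-E₁) * hP + U * hQ + (U * E₁) * hS
  obtain ⟨hE, hW⟩ := aux_div hr κ E₁ (U * D₁ - V * E₁) _ H₂ hmon hdeg heq
  obtain ⟨W₁, hW₁⟩ := hW
  refine ⟨?_, hE⟩
  have hD : D₁ = (C r) * (W₁ * G₂ + (-(D₁ * P) + V * Q + V * E₁ * S₁)) := by
    apply mul_left_cancel₀ (pow_ne_zero κ hcne)
    linear_combination (-D₁) * hP + V * hQ + (V * E₁) * hS + G₂ * hW₁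
  exact ⟨_, hD⟩

/-- Uniqueness. -/
lemma aux_unique (hr : Prime r) (κ n : ℕ) (F G H U V G₁ H₁ G₂ H₂ : R[X])
    (hH1 : H₁.Monic) (hH2 : H₂.Monic) (hd : H₁.natDegree = H₂.natDegree)
    (hUV : (C r) ^ (κ + 1) ∣ U * G + V * H - (C r) ^ κ)
    (hG1 : (C r) ^ (κ + 1) ∣ G₁ - G) (hH1c : (C r) ^ (κ + 1) ∣ H₁ - H)
    (hG2 : (C r) ^ (κ + 1) ∣ G₂ - G) (hH2c : (C r) ^ (κ + 1) ∣ H₂ - H)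
    (hF1 : (C r) ^ (n + 2 * κ) ∣ F - G₁ * H₁)
    (hF2 : (C r) ^ (n + 2 * κ) ∣ F - G₂ * H₂) :
    (C r) ^ n ∣ G₂ - G₁ ∧ (C r) ^ n ∣ H₂ - H₁ := by
  have hcne : (C r : R[X]) ≠ 0 := by simpa using hr.ne_zero
  have hbez2 : (C r) ^ (κ + 1) ∣ U * G₂ + V * H₂ - (C r) ^ κ := by
    have h : U * G₂ + V * H₂ - (C r) ^ κ
        = (U * G + V * H - (C r) ^ κ) + U * (G₂ - G) + V * (H₂ - H) := by ring
    rw [h]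
    exact dvd_add (dvd_add hUV (hG2.mul_left U)) (hH2c.mul_left V)
  have hdegE : (H₂ - H₁).degree < H₂.degree := by
    apply degree_sub_lt ?_ hH2.ne_zero (by rw [hH1.leadingCoeff, hH2.leadingCoeff])
    rw [degree_eq_natDegree hH2.ne_zero, degree_eq_natDegree hH1.ne_zero, hd]
  have hmain0 : (C r) ^ (n + 2 * κ) ∣ (G₂ - G₁) * H₂ + G₁ * (H₂ - H₁) := by
    have h : (G₂ - G₁) * H₂ + G₁ * (H₂ - H₁) = (F - G₁ * H₁) - (F - G₂ * H₂) := by ring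
    rw [h]; exact dvd_sub hF1 hF2
  have key : ∀ t : ℕ, ((C r) ^ (n + κ) ∣ G₂ - G₁ ∧ (C r) ^ (n + κ) ∣ H₂ - H₁) ∨
      ((C r) ^ (κ + 1 + t) ∣ G₂ - G₁ ∧ (C r) ^ (κ + 1 + t) ∣ H₂ - H₁) := by
    intro t
    induction t with
    | zero => exact Or.inr ⟨by simpa using hG2.sub hG1, by simpa using hH2c.sub hH1c⟩
    | succ t ih =>
      rcases ih with h | ⟨hD, hE⟩
      · exact Or.inl h
      set j := κ + 1 + t with hj
      by_cases hjn : n + κ ≤ j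
      · exact Or.inl ⟨(pow_dvd_pow _ hjn).trans hD, (pow_dvd_pow _ hjn).trans hE⟩
      push_neg at hjn
      obtain ⟨D₁, hD₁⟩ := hD
      obtain ⟨E₁, hE₁⟩ := hE
      have hcancel : (C r) ^ (κ + 1) ∣ D₁ * H₂ + G₁ * E₁ := by
        have h2 : (C r) ^ (n + 2 * κ) ∣ (C r) ^ j * (D₁ * H₂ + G₁ * E₁) := by
          have h : (C r) ^ j * (D₁ * H₂ + G₁ * E₁) = (G₂ - G₁) * H₂ + G₁ * (H₂ - H₁) := by
            rw [hD₁, hE₁]; ring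
          rw [h]; exact hmain0
        have h1 : (C r) ^ j * (C r) ^ (κ + 1) ∣ (C r) ^ j * (D₁ * H₂ + G₁ * E₁) := by
          rw [← pow_add]
          exact dvd_trans (pow_dvd_pow _ (by omega)) h2
        exact (mul_dvd_mul_iff_left (pow_ne_zero j hcne)).mp h1
      have hdegE₁ : E₁.degree < H₂.degree := by
        refine lt_of_le_of_lt ?_ hdegE
        rw [hE₁, ← map_pow, degree_C_mul (pow_ne_zero j hr.ne_zero)]
      have hGG : (C r) ^ (κ + 1) ∣ G₂ - G₁ :=
        (pow_dvd_pow _ (by omega : κ + 1 ≤ j)).trans ⟨D₁, hD₁⟩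
      obtain ⟨hD', hE'⟩ := aux_step hr κ U V G₁ G₂ H₂ D₁ E₁ hH2 hdegE₁ hbez2 hGG hcancel
      right
      constructor
      · obtain ⟨d, hd'⟩ := hD'
        exact ⟨d, by rw [hD₁, hd']; ring⟩
      · obtain ⟨e, he'⟩ := hE'
        exact ⟨e, by rw [hE₁, he']; ring⟩
  rcases key n with ⟨h1, h2⟩ | ⟨h1, h2⟩
  · exact ⟨(pow_dvd_pow _ (by omega)).trans h1, (pow_dvd_pow _ (by omega)).trans h2⟩
  · exact ⟨(pow_dvd_pow _ (by omega)).trans h1, (pow_dvd_pow _ (by omega)).trans h2⟩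

end Aux

section Aux2
variable {R : Type*} [CommRing R] [IsDomain R] {r : R}

/-- One step of the existence (Newton) iteration, for `n = m + 1 ≥ 1`. -/
lemma aux_exists_step (hr : Prime r) (κ m : ℕ) (F U V G₁ H₁ : R[X])
    (hH1 : H₁.Monic)
    (hbez : (C r) ^ (κ + 1) ∣ U * G₁ + V * H₁ - (C r) ^ κ)
    (hF : (C r) ^ (m + 1 + 2 * κ) ∣ F - G₁ * H₁) :
    ∃ G₂ H₂ : R[X], H₂.Monic ∧ H₂.natDegree = H₁.natDegree ∧
      (C r) ^ (κ + 1) ∣ G₂ - G₁ ∧ (C r) ^ (κ + 1) ∣ H₂ - H₁ ∧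
      (C r) ^ (m + 2 + 2 * κ) ∣ F - G₂ * H₂ := by
  obtain ⟨E, hE⟩ := hF
  obtain ⟨P, hP⟩ := hbez
  set q := (U * E) /ₘ H₁ with hq
  set B := (U * E) %ₘ H₁ with hB
  set A := V * E + q * G₁ with hA
  have hmod : B + H₁ * q = U * E := modByMonic_add_div (U * E) H₁
  have key : (C r) ^ κ * E - (A * H₁ + B * G₁) = (C r) ^ (κ + 1) * (-(E * P)) := by
    linear_combination (-E) * hP + (-G₁) * hmod
  refine ⟨G₁ + (C r) ^ (m + 1 + κ) * A, H₁ + (C r) ^ (m + 1 + κ) * B, ?_, ?_, ?_, ?_, ?_⟩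
  · apply hH1.add_of_left
    calc ((C r) ^ (m + 1 + κ) * B).degree = B.degree := by
          rw [← map_pow, degree_C_mul (pow_ne_zero _ hr.ne_zero)]
      _ < H₁.degree := degree_modByMonic_lt _ hH1
  · apply natDegree_eq_of_degree_eq
    apply degree_add_eq_left_of_degree_lt
    calc ((C r) ^ (m + 1 + κ) * B).degree = B.degree := by
          rw [← map_pow, degree_C_mul (pow_ne_zero _ hr.ne_zero)]
      _ < H₁.degree := degree_modByMonic_lt _ hH1
  · exact ⟨(C r) ^ m * A, by ring⟩
  · exact ⟨(C r) ^ m * B, by ring⟩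
  · refine ⟨-(E * P) - (C r) ^ m * A * B, ?_⟩
    linear_combination hE + (C r) ^ (m + 1 + κ) * key

end Aux2

/-- Generalised Hensel lifting: a factorisation `F ≡ G·H (mod X^(2κ+1))` with a
generalised Bézout relation `U·G + V·H ≡ X^κ (mod X^(κ+1))` lifts to arbitrary
precision, uniquely. -/
theorem generalised_hensel_lifting {K : Type*} [Field K] (κ : ℕ)
    (F G H U V : Polynomial (PowerSeries K)) (hH : H.Monic)
    (hFGH : Polynomial.C ((PowerSeries.X : PowerSeries K) ^ (2 * κ + 1)) ∣ F - G * H)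
    (hUV : Polynomial.C ((PowerSeries.X : PowerSeries K) ^ (κ + 1)) ∣
      U * G + V * H - Polynomial.C ((PowerSeries.X : PowerSeries K) ^ κ))
    (hdegU : U.degree < H.degree) (hdegV : V.degree < G.degree) :
    ∀ n : ℕ, ∃ G' H' : Polynomial (PowerSeries K),
      H'.Monic ∧ H'.natDegree = H.natDegree ∧
      Polynomial.C ((PowerSeries.X : PowerSeries K) ^ (κ + 1)) ∣ G' - G ∧
      Polynomial.C ((PowerSeries.X : PowerSeries K) ^ (κ + 1)) ∣ H' - H ∧
      Polynomial.C ((PowerSeries.X : PowerSeries K) ^ (n + 2 * κ)) ∣ F - G' * H' ∧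
      ∀ Gs Hs : Polynomial (PowerSeries K), Hs.Monic → Hs.natDegree = H.natDegree →
        Polynomial.C ((PowerSeries.X : PowerSeries K) ^ (κ + 1)) ∣ Gs - G →
        Polynomial.C ((PowerSeries.X : PowerSeries K) ^ (κ + 1)) ∣ Hs - H →
        Polynomial.C ((PowerSeries.X : PowerSeries K) ^ (n + 2 * κ)) ∣ F - Gs * Hs →
        Polynomial.C ((PowerSeries.X : PowerSeries K) ^ n) ∣ G' - Gs ∧
        Polynomial.C ((PowerSeries.X : PowerSeries K) ^ n) ∣ H' - Hs := by
  have hr : Prime (PowerSeries.X : PowerSeries K) := PowerSeries.X_prime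
  simp only [map_pow] at hFGH hUV ⊢
  set c : Polynomial (PowerSeries K) := C (PowerSeries.X : PowerSeries K) with hc
  -- existence for all precisions
  have exist : ∀ m : ℕ, ∃ G' H' : Polynomial (PowerSeries K),
      H'.Monic ∧ H'.natDegree = H.natDegree ∧
      c ^ (κ + 1) ∣ G' - G ∧ c ^ (κ + 1) ∣ H' - H ∧
      c ^ (m + 1 + 2 * κ) ∣ F - G' * H' := by
    intro m
    induction m with
    | zero =>
      refine ⟨G, H, hH, rfl, by simp, by simp, ?_⟩
      have h20 : 2 * κ + 1 = 0 + 1 + 2 * κ := by ring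
      rwa [h20] at hFGH
    | succ m ih =>
      obtain ⟨G₁, H₁, hH₁, hdeg₁, hG₁, hH₁c, hF₁⟩ := ih
      have hbez : c ^ (κ + 1) ∣ U * G₁ + V * H₁ - c ^ κ := by
        have h : U * G₁ + V * H₁ - c ^ κ
            = (U * G + V * H - c ^ κ) + U * (G₁ - G) + V * (H₁ - H) := by ring
        rw [h]
        exact dvd_add (dvd_add hUV (hG₁.mul_left U)) (hH₁c.mul_left V)
      obtain ⟨G₂, H₂, hH₂, hdeg₂, hG₂, hH₂c, hF₂⟩ :=
        aux_exists_step hr κ m F U V G₁ H₁ hH₁ hbez hF₁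
      refine ⟨G₂, H₂, hH₂, hdeg₂.trans hdeg₁, ?_, ?_, ?_⟩
      · have h : G₂ - G = (G₂ - G₁) + (G₁ - G) := by ring
        rw [h]; exact dvd_add hG₂ hG₁
      · have h : H₂ - H = (H₂ - H₁) + (H₁ - H) := by ring
        rw [h]; exact dvd_add hH₂c hH₁c
      · have h : m + 1 + 1 + 2 * κ = m + 2 + 2 * κ := by ring
        rwa [h]
  intro n
  -- select the pair
  obtain ⟨G', H', hH', hdeg', hG', hH'c, hF'⟩ :
      ∃ G' H' : Polynomial (PowerSeries K),
        H'.Monic ∧ H'.natDegree = H.natDegree ∧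
        c ^ (κ + 1) ∣ G' - G ∧ c ^ (κ + 1) ∣ H' - H ∧
        c ^ (n + 2 * κ) ∣ F - G' * H' := by
    rcases n with _ | m
    · refine ⟨G, H, hH, rfl, by simp, by simp, ?_⟩
      exact dvd_trans (pow_dvd_pow c (by omega)) hFGH
    · obtain ⟨G', H', h1, h2, h3, h4, h5⟩ := exist m
      exact ⟨G', H', h1, h2, h3, h4, by rwa [show m + 1 + 2 * κ = m + 1 + 2 * κ from rfl] at h5⟩
  refine ⟨G', H', hH', hdeg', hG', hH'c, hF', ?_⟩
  intro Gs Hs hHs hdegs hGs hHsc hFs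
  have := aux_unique hr κ n F G H U V G' H' Gs Hs hH' hHs (hdeg'.trans hdegs.symm)
    hUV hG' hH'c hGs hHsc hF' hFs
  obtain ⟨h1, h2⟩ := this
  constructor
  · have h : G' - Gs = -(Gs - G') := by ring
    rw [h]; exact h1.neg_right
  · have h : H' - Hs = -(Hs - H') := by ring
    rw [h]; exact h2.neg_right
end

section
/- Let K be a field and F ∈ K[[X]][Y] a nonzero polynomial not divisible by X, i.e. the polynomial F(0,Y) ∈ K[Y] obtained by taking the constant term of each coefficient of F is nonzero. Then there exist u ∈ K[[X]] and F₀, F_∞ ∈ K[[X]][Y] such that F = u·F₀·F_∞, F₀ is monic in Y, F_∞(0,Y) = 1 (the constant-term polynomial of F_∞ is the constant polynomial 1), and u has nonzero constant term (so u is a unit of K[[X]]). -/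
open Polynomial

namespace MTIF

variable {K : Type*} [Field K]
variable {g0 : Polynomial K} {c : K} {Fs : ℕ → Polynomial K} {n d : ℕ}

/-- The `X^k`-slice of `F ∈ K[[X]][Y]`, as a polynomial in `K[Y]`. -/
noncomputable def slice (F : Polynomial (PowerSeries K)) (k : ℕ) : Polynomial K :=
  F.sum fun j a => Polynomial.C ((PowerSeries.coeff (R := K) k) a) * X ^ j

lemma coeff_slice (F : Polynomial (PowerSeries K)) (k j : ℕ) :
    (slice F k).coeff j = (PowerSeries.coeff (R := K) k) (F.coeff j) := by
  rw [slice, Polynomial.sum, finset_sum_coeff]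
  simp only [coeff_C_mul, coeff_X_pow, mul_ite, mul_one, mul_zero]
  rw [Finset.sum_ite_eq]
  by_cases hj : j ∈ F.support
  · rw [if_pos hj]
  · rw [if_neg hj, Polynomial.notMem_support_iff.mp hj, map_zero]

lemma natDegree_slice_le (F : Polynomial (PowerSeries K)) (k : ℕ) :
    (slice F k).natDegree ≤ F.natDegree := by
  refine natDegree_le_iff_coeff_eq_zero.mpr fun N hN => ?_
  rw [coeff_slice, coeff_eq_zero_of_natDegree_lt hN, map_zero]

/-- The Hensel recursion: slices of the monic factor (fst) and the unit factor (snd). -/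
noncomputable def GH (g0 : Polynomial K) (c : K) (Fs : ℕ → Polynomial K) :
    ℕ → Polynomial K × Polynomial K
  | 0 => (g0, Polynomial.C c)
  | (k+1) =>
      let r := Fs (k+1) - ∑ i ∈ (Finset.range k).attach,
          (GH g0 c Fs (i.1+1)).1 * (GH g0 c Fs (k - i.1)).2
      (c⁻¹ • (r %ₘ g0), r /ₘ g0)
  decreasing_by
  · have := i.2; simp only [Finset.mem_range] at this; omega
  · omega

/-- The remainder used at step `k+1`. -/
noncomputable def rr (g0 : Polynomial K) (c : K) (Fs : ℕ → Polynomial K) (k : ℕ) :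
    Polynomial K :=
  Fs (k+1) - ∑ i ∈ Finset.range k, (GH g0 c Fs (i+1)).1 * (GH g0 c Fs (k - i)).2

lemma GH_succ (g0 : Polynomial K) (c : K) (Fs : ℕ → Polynomial K) (k : ℕ) :
    GH g0 c Fs (k+1) = (c⁻¹ • (rr g0 c Fs k %ₘ g0), rr g0 c Fs k /ₘ g0) := by
  rw [GH, rr, ← Finset.sum_attach (Finset.range k)
    (fun i => (GH g0 c Fs (i+1)).1 * (GH g0 c Fs (k - i)).2)]

lemma deg_bounds (hg0 : g0.Monic) (hn : g0.natDegree = n) (hd : n ≤ d)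
    (hFs : ∀ k, (Fs k).natDegree ≤ d) :
    ∀ k, (GH g0 c Fs k).1.natDegree ≤ n ∧ (GH g0 c Fs k).2.natDegree ≤ d - n := by
  intro k
  induction k using Nat.strong_induction_on with
  | _ k ih =>
    match k with
    | 0 =>
      rw [GH]
      exact ⟨hn.le, (natDegree_C c).le.trans (Nat.zero_le _)⟩
    | (k+1) =>
      have hr : (rr g0 c Fs k).natDegree ≤ d := by
        refine (natDegree_sub_le _ _).trans (max_le (hFs _) ?_)
        refine natDegree_sum_le_of_forall_le _ _ fun i hi => ?_
        rw [Finset.mem_range] at hi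
        refine (natDegree_mul_le).trans ?_
        have h1 := (ih (i+1) (by omega)).1
        have h2 := (ih (k-i) (by omega)).2
        omega
      rw [GH_succ]
      constructor
      · exact (natDegree_smul_le _ _).trans ((natDegree_modByMonic_le _ hg0).trans hn.le)
      · rw [natDegree_divByMonic _ hg0, hn]
        omega

lemma coeff_fst_top (hg0 : g0.Monic) (hn : g0.natDegree = n) :
    ∀ k, ((GH g0 c Fs (k+1)).1).coeff n = 0 := by
  intro k
  rw [GH_succ]
  simp only [coeff_smul, smul_eq_mul]
  rw [coeff_eq_zero_of_degree_lt, mul_zero]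
  refine lt_of_lt_of_le (degree_modByMonic_lt _ hg0) ?_
  rw [degree_eq_natDegree hg0.ne_zero, hn]

lemma sum_eq (hg0 : g0.Monic) (hc : c ≠ 0) (hFs0 : Fs 0 = g0 * Polynomial.C c) :
    ∀ k, ∑ i ∈ Finset.range (k+1), (GH g0 c Fs i).1 * (GH g0 c Fs (k-i)).2 = Fs k := by
  intro k
  match k with
  | 0 => simpa [GH] using hFs0.symm
  | (k+1) =>
    rw [Finset.sum_range_succ']
    simp only [Nat.add_sub_cancel_left, Nat.succ_sub_succ]
    rw [Finset.sum_range_succ]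
    simp only [Nat.sub_zero]
    have h0 : GH g0 c Fs 0 = (g0, Polynomial.C c) := by rw [GH]
    rw [GH_succ, h0, Nat.sub_self]
    simp only [h0]
    set r := rr g0 c Fs k with hr
    have hmod : (c⁻¹ • (r %ₘ g0)) * Polynomial.C c = r %ₘ g0 := by
      rw [mul_comm, ← smul_eq_C_mul, smul_smul, mul_inv_cancel₀ hc, one_smul]
    calc (∑ i ∈ Finset.range k, (GH g0 c Fs (i+1)).1 * (GH g0 c Fs (k-i)).2)
          + (c⁻¹ • (r %ₘ g0)) * Polynomial.C c + g0 * (r /ₘ g0)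
        = (∑ i ∈ Finset.range k, (GH g0 c Fs (i+1)).1 * (GH g0 c Fs (k-i)).2)
          + (r %ₘ g0 + g0 * (r /ₘ g0)) := by rw [hmod]; ring
      _ = (∑ i ∈ Finset.range k, (GH g0 c Fs (i+1)).1 * (GH g0 c Fs (k-i)).2) + r := by
            rw [modByMonic_add_div _ g0]
      _ = Fs (k+1) := by rw [hr, rr]; ring

/-- Assemble a family of slices (with uniform degree bound `m`) into a polynomial
over `K[[X]]`. -/
noncomputable def assemble (G : ℕ → Polynomial K) (m : ℕ) : Polynomial (PowerSeries K) :=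
  ∑ j ∈ Finset.range (m+1), Polynomial.C (PowerSeries.mk fun k => (G k).coeff j) * X ^ j

lemma coeff_assemble (G : ℕ → Polynomial K) (m : ℕ) (hG : ∀ k, (G k).natDegree ≤ m) (j : ℕ) :
    (assemble G m).coeff j = PowerSeries.mk fun k => (G k).coeff j := by
  rw [assemble, finset_sum_coeff]
  simp only [coeff_C_mul, coeff_X_pow, mul_ite, mul_one, mul_zero]
  rw [Finset.sum_ite_eq]
  by_cases hj : j ∈ Finset.range (m+1)
  · rw [if_pos hj]
  · rw [if_neg hj]
    rw [Finset.mem_range] at hj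
    ext k
    rw [PowerSeries.coeff_mk, map_zero,
      coeff_eq_zero_of_natDegree_lt (lt_of_le_of_lt (hG k) (by omega))]

lemma natDegree_assemble_le (G : ℕ → Polynomial K) (m : ℕ) :
    (assemble G m).natDegree ≤ m :=
  natDegree_sum_le_of_forall_le _ _ fun i hi =>
    (natDegree_C_mul_X_pow_le _ _).trans (Nat.lt_succ_iff.mp (Finset.mem_range.mp hi))

lemma assemble_mul (G H : ℕ → Polynomial K) (m₁ m₂ : ℕ)
    (hG : ∀ k, (G k).natDegree ≤ m₁) (hH : ∀ k, (H k).natDegree ≤ m₂)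
    (F : Polynomial (PowerSeries K))
    (hsum : ∀ k, ∑ i ∈ Finset.range (k+1), G i * H (k-i) = slice F k) :
    assemble G m₁ * assemble H m₂ = F := by
  refine Polynomial.ext fun j => PowerSeries.ext fun k => ?_
  rw [Polynomial.coeff_mul, map_sum]
  have step : ∀ p ∈ Finset.HasAntidiagonal.antidiagonal j,
      (PowerSeries.coeff (R := K) k) ((assemble G m₁).coeff p.1 * (assemble H m₂).coeff p.2)
      = ∑ q ∈ Finset.HasAntidiagonal.antidiagonal k, (G q.1).coeff p.1 * (H q.2).coeff p.2 := by
    intro p _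
    rw [coeff_assemble G m₁ hG, coeff_assemble H m₂ hH, PowerSeries.coeff_mul]
    simp only [PowerSeries.coeff_mk]
  rw [Finset.sum_congr rfl step, Finset.sum_comm]
  have step2 : ∀ q ∈ Finset.HasAntidiagonal.antidiagonal k,
      (∑ p ∈ Finset.HasAntidiagonal.antidiagonal j, (G q.1).coeff p.1 * (H q.2).coeff p.2)
      = (G q.1 * H q.2).coeff j := fun q _ => (Polynomial.coeff_mul _ _ _).symm
  rw [Finset.sum_congr rfl step2, ← finset_sum_coeff,
    Finset.Nat.sum_antidiagonal_eq_sum_range_succ (fun a b => G a * H b), hsum k,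
    coeff_slice]

end MTIF

/-- Splitting off the roots at infinity: a nonzero `F ∈ K[[X]][Y]` not divisible by
`X` factors as `F = u·F₀·F_∞` with `F₀` monic in `Y`, `F_∞(0,Y) = 1` and `u ∈ K[[X]]`
a unit (nonzero constant term). -/
theorem monic_times_infinity_factorisation {K : Type*} [Field K]
    (F : Polynomial (PowerSeries K)) (hF0 : F ≠ 0)
    (hF : F.map (PowerSeries.constantCoeff (R := K)) ≠ 0) :
    ∃ (u : PowerSeries K) (F₀ Finf : Polynomial (PowerSeries K)),
      F = Polynomial.C u * F₀ * Finf ∧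
      F₀.Monic ∧
      Finf.map (PowerSeries.constantCoeff (R := K)) = 1 ∧
      PowerSeries.constantCoeff (R := K) u ≠ 0 := by
  classical
  set Fb : Polynomial K := F.map (PowerSeries.constantCoeff (R := K)) with hFb
  set c : K := Fb.leadingCoeff with hcdef
  have hc : c ≠ 0 := leadingCoeff_ne_zero.mpr hF
  set n : ℕ := Fb.natDegree with hndef
  set d : ℕ := F.natDegree with hddef
  set g0 : Polynomial K := Fb * Polynomial.C c⁻¹ with hg0def
  have hg0 : g0.Monic := monic_mul_leadingCoeff_inv hF
  have hn : g0.natDegree = n := by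
    rw [hg0def, natDegree_mul hF (by simp [inv_ne_zero hc]), natDegree_C, add_zero]
  have hd : n ≤ d := natDegree_map_le
  set Fs : ℕ → Polynomial K := MTIF.slice F with hFsdef
  have hFs : ∀ k, (Fs k).natDegree ≤ d := fun k => MTIF.natDegree_slice_le F k
  have hFs0 : Fs 0 = g0 * Polynomial.C c := by
    have h1 : Fs 0 = Fb := by
      ext j
      rw [hFsdef, MTIF.coeff_slice, hFb, Polynomial.coeff_map,
        PowerSeries.coeff_zero_eq_constantCoeff]
    rw [h1, hg0def, mul_assoc, ← Polynomial.C_mul, inv_mul_cancel₀ hc, Polynomial.C_1,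
      mul_one]
  have hbounds := MTIF.deg_bounds (c := c) hg0 hn hd hFs
  set G : ℕ → Polynomial K := fun k => (MTIF.GH g0 c Fs k).1 with hGdef
  set H : ℕ → Polynomial K := fun k => (MTIF.GH g0 c Fs k).2 with hHdef
  have hG : ∀ k, (G k).natDegree ≤ n := fun k => (hbounds k).1
  have hH : ∀ k, (H k).natDegree ≤ d - n := fun k => (hbounds k).2
  set g : Polynomial (PowerSeries K) := MTIF.assemble G n with hgdef
  set h : Polynomial (PowerSeries K) := MTIF.assemble H (d - n) with hhdef
  have hmul : g * h = F :=
    MTIF.assemble_mul G H n (d - n) hG hH F (MTIF.sum_eq hg0 hc hFs0)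
  -- g is monic
  have hgmonic : g.Monic := by
    refine monic_of_natDegree_le_of_coeff_eq_one n (MTIF.natDegree_assemble_le G n) ?_
    rw [hgdef, MTIF.coeff_assemble G n hG]
    ext k
    rw [PowerSeries.coeff_mk, PowerSeries.coeff_one]
    match k with
    | 0 =>
      simp only [if_pos rfl]
      have : G 0 = g0 := by rw [hGdef]; simp [MTIF.GH]
      rw [this, ← hn]
      exact hg0.coeff_natDegree
    | (k+1) =>
      simp only [Nat.succ_ne_zero, if_false]
      exact MTIF.coeff_fst_top hg0 hn k
  -- h reduces to the constant c
  have hhmap : h.map (PowerSeries.constantCoeff (R := K)) = Polynomial.C c := by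
    ext j
    rw [Polynomial.coeff_map, hhdef, MTIF.coeff_assemble H (d - n) hH]
    have : (PowerSeries.constantCoeff (R := K)) (PowerSeries.mk fun k => (H k).coeff j)
        = (H 0).coeff j := PowerSeries.constantCoeff_mk
    rw [this]
    have h0 : H 0 = Polynomial.C c := by rw [hHdef]; simp [MTIF.GH]
    rw [h0]
  refine ⟨PowerSeries.C (R := K) c, g, Polynomial.C (PowerSeries.C (R := K) c⁻¹) * h, ?_, hgmonic, ?_, ?_⟩
  · have hCC : Polynomial.C (PowerSeries.C (R := K) c) * Polynomial.C (PowerSeries.C (R := K) c⁻¹)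
        = (1 : Polynomial (PowerSeries K)) := by
      rw [← Polynomial.C_mul, ← map_mul, mul_inv_cancel₀ hc, map_one, Polynomial.C_1]
    calc F = g * h := hmul.symm
      _ = (Polynomial.C (PowerSeries.C (R := K) c) * Polynomial.C (PowerSeries.C (R := K) c⁻¹))
            * (g * h) := by rw [hCC, one_mul]
      _ = Polynomial.C (PowerSeries.C (R := K) c) * g
            * (Polynomial.C (PowerSeries.C (R := K) c⁻¹) * h) := by ring
  · rw [Polynomial.map_mul, hhmap, Polynomial.map_C, PowerSeries.constantCoeff_C,
      ← Polynomial.C_mul, inv_mul_cancel₀ hc, Polynomial.C_1]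
  · rw [PowerSeries.constantCoeff_C]
    exact hc
end
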